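/- The cube ω₁³ can be written as the union of three sets A₀, A₁, A₂ such that for each i < 3, A_i is finite in the direction of the i-th axis: for every choice of values of the two coordinates other than i, the set of i-th coordinates of points of A_i with those other coordinates is finite. -/

import Mathlib

open Cardinal Set

noncomputable section

private abbrev O7 := (Cardinal.aleph 1).ord.ToType

private lemma iic_countable (m : O7) : (Set.Iic m).Countable := by
  have h : (Set.Iio m).Countable :=
    (Cardinal.countable_iff_lt_aleph_one _).2 (Cardinal.mk_Iio_ord_toType m)
  have : Set.Iic m = insert m (Set.Iio m) := by
    ext z; simp [le_iff_lt_or_eq, or_comm]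
  rw [this]; exact h.insert m

private def g7 (m : O7) : O7 → ℕ :=
  Classical.choose (Set.countable_iff_exists_injOn.1 (iic_countable m))

private lemma g7_inj (m : O7) : Set.InjOn (g7 m) (Set.Iic m) :=
  Classical.choose_spec (Set.countable_iff_exists_injOn.1 (iic_countable m))

private lemma fin3_third (p i : Fin 3) (h : p ≠ i) : ∃ t, t ≠ p ∧ t ≠ i := by
  revert h; revert p i; decide

theorem stmt_7 :
    ∃ A : Fin 3 → Set (Fin 3 → (Cardinal.aleph 1).ord.ToType),
      (⋃ i, A i) = Set.univ ∧
      ∀ (i : Fin 3) (x : Fin 3 → (Cardinal.aleph 1).ord.ToType),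
        {y ∈ A i | ∀ j ≠ i, y j = x j}.Finite := by
  classical
  refine ⟨fun i => {x | ∃ p, p ≠ i ∧ (∀ k, x k ≤ x p) ∧
      ∀ j, j ≠ p → g7 (x p) (x i) ≤ g7 (x p) (x j)}, ?_, ?_⟩
  · ext x
    simp only [Set.mem_iUnion, Set.mem_univ, iff_true, Set.mem_setOf_eq]
    -- pick p maximizing x
    obtain ⟨p, -, hp⟩ := Finset.exists_max_image Finset.univ x ⟨0, Finset.mem_univ 0⟩
    obtain ⟨i, hi, hmin⟩ := Finset.exists_min_image (Finset.univ.erase p)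
      (fun j => g7 (x p) (x j))
      ⟨(fin3_third p (if p = 0 then 1 else 0) (by split <;> simp_all)).choose, by
        have := (fin3_third p (if p = 0 then 1 else 0) (by split <;> simp_all)).choose_spec
        simp [this.1]⟩
    refine ⟨i, p, ?_, fun k => hp k (Finset.mem_univ k), fun j hj => hmin j (by simp [hj])⟩
    exact (Finset.ne_of_mem_erase hi).symm
  · intro i x
    set S := {y ∈ {z : Fin 3 → O7 | ∃ p, p ≠ i ∧ (∀ k, z k ≤ z p) ∧
      ∀ j, j ≠ p → g7 (z p) (z i) ≤ g7 (z p) (z j)} | ∀ j ≠ i, y j = x j} with hS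
    have key : ∀ y ∈ S, ∃ p, p ≠ i ∧ y i ≤ x p ∧
        g7 (x p) (y i) ≤ Finset.univ.sup (fun j => g7 (x p) (x j)) := by
      rintro y ⟨⟨p, hpi, hmax, hle⟩, hfix⟩
      have hyp : y p = x p := hfix p hpi
      obtain ⟨t, htp, hti⟩ := fin3_third p i hpi
      refine ⟨p, hpi, hyp ▸ hmax i, ?_⟩
      have := hle t htp
      rw [hyp, hfix t hti] at this
      exact this.trans (Finset.le_sup (f := fun j => g7 (x p) (x j)) (Finset.mem_univ t))
    -- the set of possible values of y i is finite
    have hfin : (⋃ p ∈ ({j | j ≠ i} : Set (Fin 3)),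
        {z : O7 | z ≤ x p ∧ g7 (x p) z ≤ Finset.univ.sup (fun j => g7 (x p) (x j))}).Finite := by
      refine Set.Finite.biUnion (Set.toFinite _) (fun p _ => ?_)
      apply Set.Finite.of_finite_image (f := g7 (x p))
      · exact (Set.finite_Iic _).subset (Set.image_subset_iff.2 (fun z hz => hz.2))
      · exact (g7_inj (x p)).mono (fun z hz => hz.1)
    have : S ⊆ (fun y => y i) ⁻¹' (⋃ p ∈ ({j | j ≠ i} : Set (Fin 3)),
        {z : O7 | z ≤ x p ∧ g7 (x p) z ≤ Finset.univ.sup (fun j => g7 (x p) (x j))}) :=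
        fun y hy => by
      obtain ⟨p, hpi, h1, h2⟩ := key y hy
      exact Set.mem_biUnion (show p ∈ {j | j ≠ i} from hpi) ⟨h1, h2⟩
    refine Set.Finite.of_finite_image (f := fun y => y i)
      ((hfin.subset (Set.image_subset_iff.2 this)))
      (fun y hy y' hy' hii => funext fun j => ?_)
    by_cases hji : j = i
    · subst hji; exact hii
    · rw [hy.2 j hji, hy'.2 j hji]
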